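/- For a needle of length ℓ thrown at random onto a plane ruled with parallel lines at distance d apart, with ℓ ≤ d, if the distance X from the needle's midpoint to the nearest line is uniformly distributed on [0, d/2] and the acute angle Θ between the needle and the lines is uniformly distributed on [0, π/2], independently, then the probability that the needle crosses a line equals 2ℓ/(πd). -/

import Mathlib

open MeasureTheory Set

theorem buffon_needle (ℓ d : ℝ) (hℓ : 0 < ℓ) (hld : ℓ ≤ d) :
    (((ENNReal.ofReal (2 / d)) • (volume.restrict (Icc (0:ℝ) (d / 2)))).prod
        ((ENNReal.ofReal (2 / Real.pi)) • (volume.restrict (Icc (0:ℝ) (Real.pi / 2)))))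
      {p : ℝ × ℝ | p.1 ≤ ℓ / 2 * Real.sin p.2}
      = ENNReal.ofReal (2 * ℓ / (Real.pi * d)) := by
  have hd : 0 < d := lt_of_lt_of_le hℓ hld
  have hπ : (0:ℝ) < Real.pi := Real.pi_pos
  have hs : MeasurableSet {p : ℝ × ℝ | p.1 ≤ ℓ / 2 * Real.sin p.2} :=
    measurableSet_le measurable_fst (by measurability)
  rw [Measure.prod_apply_symm hs, lintegral_smul_measure]
  simp_rw [Measure.smul_apply, smul_eq_mul]
  rw [lintegral_const_mul' _ _ ENNReal.ofReal_ne_top]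
  have key : ∫⁻ θ in Icc (0:ℝ) (Real.pi / 2),
      (volume.restrict (Icc (0:ℝ) (d / 2)))
        ((fun x => (x, θ)) ⁻¹' {p : ℝ × ℝ | p.1 ≤ ℓ / 2 * Real.sin p.2})
      = ENNReal.ofReal (ℓ / 2) := by
    have hcong : ∀ θ ∈ Icc (0:ℝ) (Real.pi / 2),
        (volume.restrict (Icc (0:ℝ) (d / 2)))
          ((fun x => (x, θ)) ⁻¹' {p : ℝ × ℝ | p.1 ≤ ℓ / 2 * Real.sin p.2})
        = ENNReal.ofReal (ℓ / 2 * Real.sin θ) := by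
      intro θ hθ
      have hsin0 : 0 ≤ Real.sin θ := Real.sin_nonneg_of_nonneg_of_le_pi hθ.1
        (le_trans hθ.2 (by linarith))
      have hsin1 : Real.sin θ ≤ 1 := Real.sin_le_one θ
      have ha0 : 0 ≤ ℓ / 2 * Real.sin θ := by positivity
      have ha1 : ℓ / 2 * Real.sin θ ≤ d / 2 := by nlinarith
      have hpre : (fun x => (x, θ)) ⁻¹' {p : ℝ × ℝ | p.1 ≤ ℓ / 2 * Real.sin p.2}
          = Iic (ℓ / 2 * Real.sin θ) := rfl
      rw [hpre, Measure.restrict_apply measurableSet_Iic]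
      have : Iic (ℓ / 2 * Real.sin θ) ∩ Icc (0:ℝ) (d / 2) = Icc 0 (ℓ / 2 * Real.sin θ) := by
        ext x
        simp only [mem_inter_iff, mem_Iic, mem_Icc]
        constructor
        · rintro ⟨h1, h2, h3⟩; exact ⟨h2, h1⟩
        · rintro ⟨h1, h2⟩; exact ⟨h2, h1, le_trans h2 ha1⟩
      rw [this, Real.volume_Icc, sub_zero]
    rw [setLIntegral_congr_fun measurableSet_Icc hcong]
    rw [← ofReal_integral_eq_lintegral_ofReal]
    · congr 1
      rw [integral_Icc_eq_integral_Ioc,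
        ← intervalIntegral.integral_of_le (by positivity : (0:ℝ) ≤ Real.pi / 2),
        intervalIntegral.integral_const_mul, integral_sin]
      simp
    · exact (Integrable.const_mul (Real.continuous_sin.integrableOn_Icc) _)
    · filter_upwards [self_mem_ae_restrict measurableSet_Icc] with θ hθ
      have hsin0 : 0 ≤ Real.sin θ := Real.sin_nonneg_of_nonneg_of_le_pi hθ.1
        (le_trans hθ.2 (by linarith))
      positivity
  rw [key, ← ENNReal.ofReal_mul (by positivity), ← ENNReal.ofReal_mul (by positivity)]
  congr 1
  field_simp
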